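/- Suppose a sequence of continuous bounded functions e_n : [0,∞) → Y satisfies ‖e_n(t)‖ ≤ g_n(t) + ∫₀^t Q e^{-ω(t-τ)} ‖e_{n-1}'(τ)‖ dτ for all n ≥ 1 and t ≥ 0, where each g_n(t) → 0 as t → ∞, and e_{n-1} is continuously differentiable with bounded derivative. Then limsup_{t→∞} ‖e_n(t)‖ ≤ (Q/ω) · limsup_{t→∞} ‖e_{n-1}'(t)‖. -/

import Mathlib

open Filter Real intervalIntegral

theorem stmt15 {Y : Type*} [NormedAddCommGroup Y] [NormedSpace ℝ Y]
    (e ePrev e' : ℝ → Y) (gn : ℝ → ℝ) (Q ω : ℝ) (hQ : 0 ≤ Q) (hω : 0 < ω)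
    (hgn0 : ∀ t, 0 ≤ gn t)
    (hcont : Continuous e) (hbdd : ∃ M, ∀ t, ‖e t‖ ≤ M)
    (hderiv : ∀ t, HasDerivAt ePrev (e' t) t)
    (hcont' : Continuous e') (hbdd' : ∃ M', ∀ t, ‖e' t‖ ≤ M')
    (hgn : Filter.Tendsto gn Filter.atTop (nhds 0))
    (hrec : ∀ t ≥ (0:ℝ), ‖e t‖ ≤ gn t
      + ∫ τ in (0:ℝ)..t, Q * Real.exp (-ω * (t - τ)) * ‖e' τ‖) :
    Filter.limsup (fun t => ‖e t‖) Filter.atTop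
      ≤ (Q / ω) * Filter.limsup (fun t => ‖e' t‖) Filter.atTop := by
  obtain ⟨M', hM'⟩ := hbdd'
  have hM'0 : 0 ≤ M' := le_trans (norm_nonneg _) (hM' 0)
  set L := Filter.limsup (fun t => ‖e' t‖) Filter.atTop with hLdef
  have hbd' : Filter.IsBoundedUnder (· ≤ ·) Filter.atTop (fun t => ‖e' t‖) :=
    ⟨M', Filter.eventually_map.mpr (Filter.Eventually.of_forall hM')⟩
  have hL0 : 0 ≤ L :=
    Filter.le_limsup_of_frequently_le
      (Filter.Frequently.of_forall fun t => norm_nonneg _) hbd'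
  have hcob : Filter.IsCoboundedUnder (· ≤ ·) Filter.atTop (fun t => ‖e t‖) :=
    Filter.isCoboundedUnder_le_of_le _ fun t => norm_nonneg (e t)
  refine le_of_forall_gt_imp_ge_of_dense fun c hc => ?_
  -- choose ε
  set ε : ℝ := (c - (Q / ω) * L) / (Q / ω + 2) with hεdef
  have hQω : 0 ≤ Q / ω := div_nonneg hQ hω.le
  have hε : 0 < ε := div_pos (by linarith) (by linarith)
  have hkey : (Q / ω) * (L + ε) + 2 * ε ≤ c := by
    have : (Q / ω + 2) * ε = c - (Q / ω) * L := by
      rw [hεdef]; field_simp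
    nlinarith
  -- a threshold T past which ‖e' t‖ ≤ L + ε
  have hev' : ∀ᶠ t in Filter.atTop, ‖e' t‖ < L + ε :=
    Filter.eventually_lt_of_limsup_lt (by linarith) hbd'
  obtain ⟨T0, hT0⟩ := Filter.eventually_atTop.mp hev'
  set T : ℝ := max T0 0 with hTdef
  have hT0le : (0:ℝ) ≤ T := le_max_right _ _
  have hTbound : ∀ τ, T ≤ τ → ‖e' τ‖ ≤ L + ε :=
    fun τ hτ => (hT0 τ (le_trans (le_max_left _ _) hτ)).le
  -- main eventual bound
  have hexp0 : Filter.Tendsto (fun t => Q * M' * T * Real.exp (-ω * (t - T)))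
      Filter.atTop (nhds 0) := by
    have h1 : Filter.Tendsto (fun t : ℝ => -ω * (t - T)) Filter.atTop Filter.atBot := by
      have ha : Filter.Tendsto (fun t : ℝ => t - T) Filter.atTop Filter.atTop := by
        simpa [sub_eq_add_neg] using
          Filter.tendsto_atTop_add_const_right Filter.atTop (-T) Filter.tendsto_id
      have hb : Filter.Tendsto (fun t : ℝ => ω * (t - T)) Filter.atTop Filter.atTop :=
        (Filter.tendsto_const_mul_atTop_of_pos hω).mpr ha
      have hc : Filter.Tendsto (fun t : ℝ => -(ω * (t - T))) Filter.atTop Filter.atBot :=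
        Filter.tendsto_neg_atTop_atBot.comp hb
      simpa [neg_mul] using hc
    have h2 : Filter.Tendsto (fun t : ℝ => Real.exp (-ω * (t - T))) Filter.atTop (nhds 0) :=
      Real.tendsto_exp_atBot.comp h1
    simpa using h2.const_mul (Q * M' * T)
  have hexps : ∀ᶠ t in Filter.atTop, Q * M' * T * Real.exp (-ω * (t - T)) < ε :=
    hexp0.eventually (gt_mem_nhds hε)
  have hgns : ∀ᶠ t in Filter.atTop, gn t < ε := hgn.eventually (gt_mem_nhds hε)
  refine Filter.limsup_le_of_le hcob ?_
  filter_upwards [hexps, hgns, Filter.eventually_ge_atTop T] with t hexpt hgnt hTt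
  have ht0 : (0:ℝ) ≤ t := le_trans hT0le hTt
  -- integrability
  have hexpc : Continuous fun τ : ℝ => Real.exp (-ω * (t - τ)) :=
    Real.continuous_exp.comp (continuous_const.mul (continuous_const.sub continuous_id))
  have hcf : Continuous fun τ => Q * Real.exp (-ω * (t - τ)) * ‖e' τ‖ :=
    (continuous_const.mul hexpc).mul hcont'.norm
  have hint1 : IntervalIntegrable (fun τ => Q * Real.exp (-ω * (t - τ)) * ‖e' τ‖)
      MeasureTheory.volume 0 T := hcf.intervalIntegrable _ _
  have hint2 : IntervalIntegrable (fun τ => Q * Real.exp (-ω * (t - τ)) * ‖e' τ‖)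
      MeasureTheory.volume T t := hcf.intervalIntegrable _ _
  have hsplit : (∫ τ in (0:ℝ)..t, Q * Real.exp (-ω * (t - τ)) * ‖e' τ‖)
      = (∫ τ in (0:ℝ)..T, Q * Real.exp (-ω * (t - τ)) * ‖e' τ‖)
        + ∫ τ in T..t, Q * Real.exp (-ω * (t - τ)) * ‖e' τ‖ :=
    (intervalIntegral.integral_add_adjacent_intervals hint1 hint2).symm
  -- bound on [0,T]
  have hb1 : (∫ τ in (0:ℝ)..T, Q * Real.exp (-ω * (t - τ)) * ‖e' τ‖)
      ≤ Q * M' * T * Real.exp (-ω * (t - T)) := by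
    have : (∫ τ in (0:ℝ)..T, Q * Real.exp (-ω * (t - τ)) * ‖e' τ‖)
        ≤ ∫ _τ in (0:ℝ)..T, Q * Real.exp (-ω * (t - T)) * M' := by
      apply intervalIntegral.integral_mono_on hT0le hint1
        (intervalIntegrable_const)
      intro τ hτ
      have h1 : Real.exp (-ω * (t - τ)) ≤ Real.exp (-ω * (t - T)) := by
        apply Real.exp_le_exp.mpr; nlinarith [hτ.2]
      exact mul_le_mul (mul_le_mul_of_nonneg_left h1 hQ) (hM' τ) (norm_nonneg _)
        (by positivity)
    rw [intervalIntegral.integral_const] at this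
    calc _ ≤ (T - 0) • (Q * Real.exp (-ω * (t - T)) * M') := this
    _ = Q * M' * T * Real.exp (-ω * (t - T)) := by ring_nf
  -- bound on [T,t]
  have hIval : (∫ τ in T..t, Real.exp (-ω * (t - τ)))
      = (1 - Real.exp (-ω * (t - T))) / ω := by
    have hd : ∀ τ ∈ Set.uIcc T t, HasDerivAt (fun τ => Real.exp (-ω * (t - τ)) / ω)
        (Real.exp (-ω * (t - τ))) τ := by
      intro τ _
      have h1 : HasDerivAt (fun τ : ℝ => -ω * (t - τ)) ω τ := by
        simpa using ((hasDerivAt_id τ).const_sub t).const_mul (-ω)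
      have h2 := (Real.hasDerivAt_exp (-ω * (t - τ))).comp τ h1
      have h3 := h2.div_const ω
      rw [mul_div_cancel_right₀ _ hω.ne'] at h3
      exact h3
    have := intervalIntegral.integral_eq_sub_of_hasDerivAt hd
      (hexpc.intervalIntegrable _ _)
    rw [this]
    simp
    ring
  have hb2 : (∫ τ in T..t, Q * Real.exp (-ω * (t - τ)) * ‖e' τ‖)
      ≤ Q * (L + ε) / ω := by
    have hmono : (∫ τ in T..t, Q * Real.exp (-ω * (t - τ)) * ‖e' τ‖)
        ≤ ∫ τ in T..t, Q * (L + ε) * Real.exp (-ω * (t - τ)) := by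
      apply intervalIntegral.integral_mono_on hTt hint2
        ((continuous_const.mul hexpc).intervalIntegrable _ _)
      intro τ hτ
      have hLe := hTbound τ hτ.1
      have hex := (Real.exp_pos (-ω * (t - τ))).le
      calc Q * Real.exp (-ω * (t - τ)) * ‖e' τ‖
          ≤ Q * Real.exp (-ω * (t - τ)) * (L + ε) :=
            mul_le_mul_of_nonneg_left hLe (mul_nonneg hQ hex)
        _ = Q * (L + ε) * Real.exp (-ω * (t - τ)) := by ring
    have : (∫ τ in T..t, Q * (L + ε) * Real.exp (-ω * (t - τ)))
        = Q * (L + ε) * ((1 - Real.exp (-ω * (t - T))) / ω) := by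
      rw [intervalIntegral.integral_const_mul, hIval]
    rw [this] at hmono
    refine le_trans hmono ?_
    have hQL : 0 ≤ Q * (L + ε) := mul_nonneg hQ (by linarith)
    have hex1 : (0:ℝ) ≤ Real.exp (-ω * (t - T)) := (Real.exp_pos _).le
    rw [show Q * (L + ε) * ((1 - Real.exp (-ω * (t - T))) / ω)
        = (Q * (L + ε) * (1 - Real.exp (-ω * (t - T)))) / ω from by ring]
    have hexle : Real.exp (-ω * (t - T)) ≤ 1 :=
      Real.exp_le_one_iff.mpr (by nlinarith)
    apply div_le_div_of_nonneg_right ?_ hω.le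
    nlinarith
  -- combine
  have hr := hrec t ht0
  rw [hsplit] at hr
  have : Q * (L + ε) / ω = (Q / ω) * (L + ε) := by ring
  linarith [this ▸ hb2]
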